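/- The function I = k2·(y·pz − z·py) + k3·(z·px − x·pz) + k4·(x·py − y·px) has vanishing Poisson bracket with H_μ = (1/(1−λr²))·[ (px²+py²+pz²)/2 + k1(x²+y²+z²) + k2 x + k3 y + k4 z ], where r² = x²+y²+z². -/

import Mathlib

noncomputable section

/-- Phase space ℝ⁶ with coordinates (x,y,z,px,py,pz). -/
abbrev Pt := Fin 6 → ℝ

/-- Standard basis vector. -/
def e (j : Fin 6) : Pt := Pi.single j 1

/-- Canonical Poisson bracket on ℝ⁶:
{F,G} = Σᵢ (∂F/∂qᵢ ∂G/∂pᵢ − ∂F/∂pᵢ ∂G/∂qᵢ). -/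
def pb (F G : Pt → ℝ) (q : Pt) : ℝ :=
    (fderiv ℝ F q (e 0)) * (fderiv ℝ G q (e 3)) - (fderiv ℝ F q (e 3)) * (fderiv ℝ G q (e 0))
  + (fderiv ℝ F q (e 1)) * (fderiv ℝ G q (e 4)) - (fderiv ℝ F q (e 4)) * (fderiv ℝ G q (e 1))
  + (fderiv ℝ F q (e 2)) * (fderiv ℝ G q (e 5)) - (fderiv ℝ F q (e 5)) * (fderiv ℝ G q (e 2))

/-- H_μ = (1/(1−λr²))·[(px²+py²+pz²)/2 + k1 r² + k2 x + k3 y + k4 z]. -/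
def Hmu (lam k1 k2 k3 k4 : ℝ) (q : Pt) : ℝ :=
  (1 / (1 - lam * (q 0 ^ 2 + q 1 ^ 2 + q 2 ^ 2))) *
    ((q 3 ^ 2 + q 4 ^ 2 + q 5 ^ 2) / 2 + k1 * (q 0 ^ 2 + q 1 ^ 2 + q 2 ^ 2)
      + k2 * q 0 + k3 * q 1 + k4 * q 2)

/-- I = k2·(y pz − z py) + k3·(z px − x pz) + k4·(x py − y px). -/
def Ifun (k2 k3 k4 : ℝ) (q : Pt) : ℝ :=
  k2 * (q 1 * q 5 - q 2 * q 4) + k3 * (q 2 * q 3 - q 0 * q 5) + k4 * (q 0 * q 4 - q 1 * q 3)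

set_option maxHeartbeats 1000000 in
theorem stmt0 (lam k1 k2 k3 k4 : ℝ) :
    ∀ q : Pt, 1 - lam * (q 0 ^ 2 + q 1 ^ 2 + q 2 ^ 2) > 0 →
      pb (Ifun k2 k3 k4) (Hmu lam k1 k2 k3 k4) q = 0 := by
  intro q h
  have hD0 : (1 - lam * (q 0 ^ 2 + q 1 ^ 2 + q 2 ^ 2)) ≠ 0 := ne_of_gt h
  have hx : ∀ i : Fin 6, HasFDerivAt (fun p : Pt => p i)
      (ContinuousLinearMap.proj i : Pt →L[ℝ] ℝ) q := fun i => hasFDerivAt_apply i q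
  have hsq : ∀ i : Fin 6, HasFDerivAt (fun p : Pt => p i ^ 2)
      ((2 * q i) • (ContinuousLinearMap.proj i : Pt →L[ℝ] ℝ)) q := by
    intro i
    simpa [pow_two, two_mul, add_smul] using (hx i).fun_mul (hx i)
  set P : Fin 6 → (Pt →L[ℝ] ℝ) := fun i => ContinuousLinearMap.proj i with hP
  set D : ℝ := 1 - lam * (q 0 ^ 2 + q 1 ^ 2 + q 2 ^ 2) with hDdef
  set Gv : ℝ := (q 3 ^ 2 + q 4 ^ 2 + q 5 ^ 2) / 2 + k1 * (q 0 ^ 2 + q 1 ^ 2 + q 2 ^ 2)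
      + k2 * q 0 + k3 * q 1 + k4 * q 2 with hGdef
  have hI : HasFDerivAt (Ifun k2 k3 k4)
      (k2 • (q 1 • P 5 + q 5 • P 1 - (q 2 • P 4 + q 4 • P 2))
        + k3 • (q 2 • P 3 + q 3 • P 2 - (q 0 • P 5 + q 5 • P 0))
        + k4 • (q 0 • P 4 + q 4 • P 0 - (q 1 • P 3 + q 3 • P 1))) q := by
    unfold Ifun
    exact ((((((hx 1).mul (hx 5)).sub ((hx 2).mul (hx 4))).const_mul k2).add
      ((((hx 2).mul (hx 3)).sub ((hx 0).mul (hx 5))).const_mul k3)).add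
        ((((hx 0).mul (hx 4)).sub ((hx 1).mul (hx 3))).const_mul k4))
  have hG : HasFDerivAt (fun p : Pt => (p 3 ^ 2 + p 4 ^ 2 + p 5 ^ 2) * 2⁻¹
      + k1 * (p 0 ^ 2 + p 1 ^ 2 + p 2 ^ 2) + k2 * p 0 + k3 * p 1 + k4 * p 2)
      ((2:ℝ)⁻¹ • ((2 * q 3) • P 3 + (2 * q 4) • P 4 + (2 * q 5) • P 5)
        + k1 • ((2 * q 0) • P 0 + (2 * q 1) • P 1 + (2 * q 2) • P 2)
        + k2 • P 0 + k3 • P 1 + k4 • P 2) q :=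
    ((((((hsq 3).add (hsq 4)).add (hsq 5)).mul_const (2:ℝ)⁻¹).add
      ((((hsq 0).add (hsq 1)).add (hsq 2)).const_mul k1)).add
      ((hx 0).const_mul k2)).add ((hx 1).const_mul k3) |>.add ((hx 2).const_mul k4)
  have hD : HasFDerivAt (fun p : Pt => 1 - lam * (p 0 ^ 2 + p 1 ^ 2 + p 2 ^ 2))
      ((0 : Pt →L[ℝ] ℝ) - lam • ((2 * q 0) • P 0 + (2 * q 1) • P 1 + (2 * q 2) • P 2)) q :=
    (hasFDerivAt_const (1:ℝ) q).sub
      ((((hsq 0).add (hsq 1)).add (hsq 2)).const_mul lam)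
  have hinv : HasFDerivAt (fun p : Pt => (1 - lam * (p 0 ^ 2 + p 1 ^ 2 + p 2 ^ 2))⁻¹)
      ((-(ContinuousLinearMap.mulLeftRight ℝ ℝ D⁻¹ D⁻¹)).comp
        ((0 : Pt →L[ℝ] ℝ) - lam • ((2 * q 0) • P 0 + (2 * q 1) • P 1 + (2 * q 2) • P 2))) q :=
    (hasFDerivAt_inv' (𝕜 := ℝ) hD0).comp q hD
  have hH : HasFDerivAt (Hmu lam k1 k2 k3 k4)
      ((1 * D⁻¹) • ((2:ℝ)⁻¹ • ((2 * q 3) • P 3 + (2 * q 4) • P 4 + (2 * q 5) • P 5)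
          + k1 • ((2 * q 0) • P 0 + (2 * q 1) • P 1 + (2 * q 2) • P 2)
          + k2 • P 0 + k3 • P 1 + k4 • P 2)
        + Gv • ((1:ℝ) • ((-(ContinuousLinearMap.mulLeftRight ℝ ℝ D⁻¹ D⁻¹)).comp
            ((0 : Pt →L[ℝ] ℝ) - lam • ((2 * q 0) • P 0 + (2 * q 1) • P 1 + (2 * q 2) • P 2))))) q := by
    unfold Hmu
    simp only [div_eq_mul_inv]
    exact (hinv.const_mul (1:ℝ)).mul hG
  unfold pb
  rw [hI.fderiv, hH.fderiv]
  simp only [ContinuousLinearMap.add_apply, ContinuousLinearMap.sub_apply,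
    ContinuousLinearMap.smul_apply, ContinuousLinearMap.comp_apply,
    ContinuousLinearMap.neg_apply, ContinuousLinearMap.mulLeftRight_apply,
    ContinuousLinearMap.zero_apply, smul_eq_mul, hP, ContinuousLinearMap.proj_apply,
    e, Pi.single_apply]
  simp (config := { decide := true }) only [Pi.single_apply, if_true, if_false]
  ring
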